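/- arXiv:2508.12012 — 3 statements merged into one kernel-verified Lean document; each statement's English description precedes it below -/
import Mathlib

section
/- Let $\Gamma_c$ be a nonnegative random variable with CDF $F(y) = 1 - e^{-C_1 y}(1 + C_2 y)^{-D}$ for $y \ge 0$, where $C_1, C_2 > 0$ and $D$ is a positive integer. Then $\mathbb{E}[\Gamma_c] = \frac{e^{C_1/C_2}}{C_2} E_D(C_1/C_2)$, where $E_D(x) = \int_1^\infty e^{-tx} t^{-D}\,dt$ is the generalized exponential integral. -/
open MeasureTheory ProbabilityTheory Real

open Set in
lemma integral_comp_add_right_Ioi' (g : ℝ → ℝ) (a d : ℝ) :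
    (∫ x in Ioi a, g (x + d)) = ∫ x in Ioi (a + d), g x := by
  rw [← integral_indicator measurableSet_Ioi, ← integral_indicator measurableSet_Ioi,
    ← integral_add_right_eq_self (fun x => (Ioi (a + d)).indicator g x) d]
  congr 1
  ext x
  by_cases hx : x ∈ Ioi a
  · rw [Set.indicator_of_mem hx, Set.indicator_of_mem (by simpa using hx)]
  · rw [Set.indicator_of_notMem hx, Set.indicator_of_notMem (by simpa using hx)]

/-- If a nonnegative random variable `Γc` has CDF `F(y) = 1 - e^{-C₁y}(1+C₂y)^{-D}` for
`y ≥ 0`, with `C₁, C₂ > 0` and `D` a positive integer, then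
`𝔼[Γc] = (e^{C₁/C₂}/C₂) · E_D(C₁/C₂)` where `E_D(x) = ∫₁^∞ e^{-tx} t^{-D} dt`. -/
theorem mean_sinr_common {Ω : Type*} [MeasureSpace Ω] [IsProbabilityMeasure (ℙ : Measure Ω)]
    (X : Ω → ℝ) (hm : Measurable X) (hnonneg : ∀ ω, 0 ≤ X ω) (hint : Integrable X ℙ)
    (C₁ C₂ : ℝ) (D : ℕ) (hC₁ : 0 < C₁) (hC₂ : 0 < C₂) (hD : 0 < D)
    (hcdf : ∀ y : ℝ, 0 ≤ y →
      ((ℙ : Measure Ω) {ω | X ω ≤ y}).toReal = 1 - Real.exp (-C₁ * y) * (1 + C₂ * y) ^ (-(D : ℝ))) :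
    ∫ ω, X ω ∂ℙ = Real.exp (C₁ / C₂) / C₂
        * ∫ t in Set.Ioi (1 : ℝ), Real.exp (-t * (C₁ / C₂)) * t ^ (-(D : ℝ)) := by
  rw [hint.integral_eq_integral_meas_lt (ae_of_all _ hnonneg)]
  have hsurv : ∀ y ∈ Set.Ioi (0 : ℝ),
      ((ℙ : Measure Ω) {a | y < X a}).toReal
        = Real.exp (-C₁ * y) * (1 + C₂ * y) ^ (-(D : ℝ)) := by
    intro y hy
    have hs : {a : Ω | y < X a} = {a : Ω | X a ≤ y}ᶜ := by ext a; simp [not_le]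
    have hmeas : MeasurableSet {a : Ω | X a ≤ y} := hm measurableSet_Iic
    rw [hs, measure_compl hmeas (measure_ne_top _ _), measure_univ,
      ENNReal.toReal_sub_of_le (measure_mono (Set.subset_univ _) |>.trans_eq measure_univ)
        (by simp), ENNReal.toReal_one, hcdf y (le_of_lt hy)]
    ring
  rw [setIntegral_congr_fun (f := fun t => (ℙ : Measure Ω).real {a | t < X a}) measurableSet_Ioi hsurv]
  -- substitution
  set g : ℝ → ℝ := fun t => Real.exp (-t * (C₁ / C₂)) * t ^ (-(D : ℝ)) with hg
  have key : ∀ y ∈ Set.Ioi (0 : ℝ),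
      Real.exp (-C₁ * y) * (1 + C₂ * y) ^ (-(D : ℝ))
        = Real.exp (C₁ / C₂) * g (C₂ * y + 1) := by
    intro y hy
    rw [hg]
    simp only
    rw [← mul_assoc, ← Real.exp_add]
    have : C₁ / C₂ + -(C₂ * y + 1) * (C₁ / C₂) = -C₁ * y := by
      field_simp; ring
    rw [this]
    ring_nf
  rw [setIntegral_congr_fun measurableSet_Ioi key, integral_const_mul]
  have h1 : (∫ y in Set.Ioi (0:ℝ), g (C₂ * y + 1))
      = C₂⁻¹ • ∫ y in Set.Ioi (C₂ * 0), g (y + 1) :=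
    integral_comp_mul_left_Ioi (fun y => g (y + 1)) 0 hC₂
  rw [h1, mul_zero, integral_comp_add_right_Ioi' g 0 1, zero_add, smul_eq_mul]
  ring
end

section
/- For $C_1, C_2 > 0$ and positive integer $n$, define $\Psi(n) = \frac{e^{(C_1/C_2)(C_2-1)}}{(1-C_2)^n} E_1(C_1) - \sum_{i=1}^n \frac{E_i(C_1/C_2)}{(1-C_2)^{n+1-i}}$ where $E_v(x) = \int_1^\infty e^{-tx}t^{-v}dt$, and assume $C_2 \ne 1$. Then for a nonnegative random variable $\Gamma$ with CDF $F(y) = 1 - e^{-C_1 y}(1+C_2 y)^{-n}$ one has $\mathbb{E}[\ln(1+\Gamma)] = e^{C_1/C_2}\,\Psi(n)\cdot \ln 2 \cdot \frac{1}{\ln 2}$, i.e., $\mathbb{E}[\log_2(1+\Gamma)] = \frac{e^{C_1/C_2}}{\ln 2}\Psi(n)$. -/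
open MeasureTheory ProbabilityTheory Real Finset
open scoped ENNReal

section ErgAuxSec
open MeasureTheory Real Finset Set

namespace ErgAux

lemma integral_Ioi_add_right (f : ℝ → ℝ) (a d : ℝ) :
    ∫ x in Set.Ioi a, f (x + d) = ∫ x in Set.Ioi (a + d), f x := by
  rw [← integral_indicator measurableSet_Ioi, ← integral_indicator measurableSet_Ioi,
    ← integral_add_right_eq_self ((Set.Ioi (a + d)).indicator f) d]
  congr 1
  ext x
  simp [Set.indicator_apply, Set.mem_Ioi, add_lt_add_iff_right]

lemma pf (C₂ : ℝ) (h1C : (1:ℝ) - C₂ ≠ 0) (t : ℝ) (h1 : (1:ℝ) + t ≠ 0)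
    (h2 : 1 + C₂ * t ≠ 0) (n : ℕ) :
    ((1 + t) * (1 + C₂ * t) ^ n)⁻¹
      = ((1 - C₂) ^ n)⁻¹ * (1 + t)⁻¹
        - ∑ i ∈ Finset.Icc 1 n, C₂ * ((1 - C₂) ^ (n + 1 - i))⁻¹ * ((1 + C₂ * t) ^ i)⁻¹ := by
  induction n with
  | zero => simp
  | succ m ih =>
    have hsum : ∑ i ∈ Finset.Icc 1 (m+1), C₂ * ((1 - C₂) ^ (m + 1 + 1 - i))⁻¹ * ((1 + C₂ * t) ^ i)⁻¹
        = (1 - C₂)⁻¹ * (∑ i ∈ Finset.Icc 1 m, C₂ * ((1 - C₂) ^ (m + 1 - i))⁻¹ * ((1 + C₂ * t) ^ i)⁻¹)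
          + C₂ * (1 - C₂)⁻¹ * ((1 + C₂ * t) ^ (m+1))⁻¹ := by
      rw [Finset.sum_Icc_succ_top (by omega : 1 ≤ m + 1), Finset.mul_sum]
      congr 1
      · apply Finset.sum_congr rfl
        intro i hi
        have hi' : i ≤ m := (Finset.mem_Icc.mp hi).2
        have he : m + 1 + 1 - i = (m + 1 - i) + 1 := by omega
        rw [he, pow_succ, mul_inv]
        ring
      · norm_num
    have ihs : (∑ i ∈ Finset.Icc 1 m, C₂ * ((1 - C₂) ^ (m + 1 - i))⁻¹ * ((1 + C₂ * t) ^ i)⁻¹)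
        = ((1 - C₂) ^ m)⁻¹ * (1 + t)⁻¹ - ((1 + t) * (1 + C₂ * t) ^ m)⁻¹ := by linarith [ih]
    rw [hsum, ihs]
    have ha : (1 + t)⁻¹ * (1 + t) = 1 := inv_mul_cancel₀ h1
    have hb : (1 + C₂ * t)⁻¹ * (1 + C₂ * t) = 1 := inv_mul_cancel₀ h2
    have hc : (1 - C₂)⁻¹ * (1 - C₂) = 1 := inv_mul_cancel₀ h1C
    simp only [mul_inv, ← inv_pow]
    linear_combination ((1 - C₂)⁻¹ * ((1 + C₂ * t)⁻¹) ^ m * (1 + t)⁻¹) * hb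
      - ((1 - C₂)⁻¹ * ((1 + C₂ * t)⁻¹) ^ m * C₂ * (1 + C₂ * t)⁻¹) * ha
      - ((1 + t)⁻¹ * (1 + C₂ * t)⁻¹ * ((1 + C₂ * t)⁻¹) ^ m) * hc



lemma integrableOn_aux {C₁ : ℝ} (hC₁ : 0 < C₁) (g : ℝ → ℝ) (hg : Measurable g)
    (hb : ∀ t ∈ Set.Ioi (0:ℝ), 0 ≤ g t ∧ g t ≤ 1) :
    IntegrableOn (fun t => Real.exp (-C₁ * t) * g t) (Set.Ioi 0) := by
  apply Integrable.mono (exp_neg_integrableOn_Ioi 0 hC₁)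
  · exact ((Real.measurable_exp.comp (measurable_const.mul measurable_id)).mul
      hg).aestronglyMeasurable
  · rw [ae_restrict_iff' measurableSet_Ioi]
    refine ae_of_all _ fun t ht => ?_
    obtain ⟨h0, h1⟩ := hb t ht
    have he : 0 < Real.exp (-C₁ * t) := Real.exp_pos _
    rw [Real.norm_eq_abs, Real.norm_eq_abs, abs_of_nonneg (by positivity),
      abs_of_nonneg he.le]
    nlinarith

lemma key_sub (x : ℝ) (i : ℕ) (c : ℝ) (hc : 0 < c) :
    ∫ s in Set.Ioi (1:ℝ), Real.exp (-s * x) * s ^ (-(i:ℝ))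
      = c * Real.exp (-x) * ∫ t in Set.Ioi (0:ℝ), Real.exp (-(c*x) * t) * ((1 + c * t) ^ i)⁻¹ := by
  have h1 : ∫ s in Set.Ioi (1:ℝ), Real.exp (-s * x) * s ^ (-(i:ℝ))
      = ∫ t in Set.Ioi (0:ℝ), Real.exp (-(t+1) * x) * (t+1) ^ (-(i:ℝ)) := by
    rw [integral_Ioi_add_right (fun s => Real.exp (-s * x) * s ^ (-(i:ℝ))) 0 1, zero_add]
  have h2 : ∫ t in Set.Ioi (0:ℝ), Real.exp (-(c*t+1) * x) * (c*t+1) ^ (-(i:ℝ))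
      = c⁻¹ • ∫ t in Set.Ioi (0:ℝ), Real.exp (-(t+1) * x) * (t+1) ^ (-(i:ℝ)) := by
    simpa using integral_comp_mul_left_Ioi
      (fun t => Real.exp (-(t+1) * x) * (t+1) ^ (-(i:ℝ))) 0 hc
  have h3 : ∫ t in Set.Ioi (0:ℝ), Real.exp (-(c*t+1) * x) * (c*t+1) ^ (-(i:ℝ))
      = ∫ t in Set.Ioi (0:ℝ), Real.exp (-x) * (Real.exp (-(c*x) * t) * ((1 + c * t) ^ i)⁻¹) := by
    apply setIntegral_congr_fun measurableSet_Ioi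
    intro t ht
    have hpos : (0:ℝ) < c * t + 1 := by have := ht.out; positivity
    simp only
    rw [Real.rpow_neg hpos.le, Real.rpow_natCast,
      show (-(c*t+1) * x) = -x + (-(c*x)*t) by ring, Real.exp_add]
    ring
  rw [h3, integral_const_mul, smul_eq_mul] at h2
  rw [h1, mul_assoc, h2, ← mul_assoc, mul_inv_cancel₀ hc.ne', one_mul]


noncomputable def fA (C₁ C₂ : ℝ) (n : ℕ) (t : ℝ) : ℝ :=
  Real.exp (-C₁ * t) * ((1 + C₂ * t) ^ n)⁻¹ * (1 + t)⁻¹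

noncomputable def gA (C₁ : ℝ) (t : ℝ) : ℝ := Real.exp (-C₁ * t) * (1 + t)⁻¹

noncomputable def kA (C₁ C₂ : ℝ) (i : ℕ) (t : ℝ) : ℝ :=
  Real.exp (-C₁ * t) * ((1 + C₂ * t) ^ i)⁻¹

lemma fA_integrableOn {C₁ C₂ : ℝ} (hC₁ : 0 < C₁) (hC₂ : 0 < C₂) (n : ℕ) :
    IntegrableOn (fA C₁ C₂ n) (Set.Ioi 0) := by
  have := integrableOn_aux hC₁ (fun t => ((1 + C₂ * t) ^ n)⁻¹ * (1 + t)⁻¹)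
    (((measurable_const.add (measurable_const.mul measurable_id)).pow_const n).inv.mul
      (measurable_const.add measurable_id).inv)
    (by
      intro t ht
      have ht0 : (0:ℝ) < t := ht
      have h1 : (0:ℝ) < 1 + C₂ * t := by nlinarith
      have h2 : (0:ℝ) < 1 + t := by linarith
      constructor
      · positivity
      · have e1 : ((1 + C₂ * t) ^ n)⁻¹ ≤ 1 := by
          rw [inv_le_one_iff₀]; right; exact one_le_pow₀ (by nlinarith)
        have e2 : (1 + t)⁻¹ ≤ 1 := by
          rw [inv_le_one_iff₀]; right; linarith
        have p1 : (0:ℝ) ≤ ((1 + C₂ * t) ^ n)⁻¹ := by positivity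
        have p2 : (0:ℝ) ≤ (1 + t)⁻¹ := by positivity
        nlinarith)
  exact this.congr_fun (fun t _ => by simp [fA, mul_assoc]) measurableSet_Ioi

lemma gA_integrableOn {C₁ : ℝ} (hC₁ : 0 < C₁) :
    IntegrableOn (gA C₁) (Set.Ioi 0) := by
  refine integrableOn_aux hC₁ (fun t => (1 + t)⁻¹) (measurable_const.add measurable_id).inv ?_
  intro t ht
  have ht0 : (0:ℝ) < t := ht
  have h2 : (0:ℝ) < 1 + t := by linarith
  exact ⟨by positivity, by rw [inv_le_one_iff₀]; right; linarith⟩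

lemma kA_integrableOn {C₁ C₂ : ℝ} (hC₁ : 0 < C₁) (hC₂ : 0 < C₂) (i : ℕ) :
    IntegrableOn (kA C₁ C₂ i) (Set.Ioi 0) := by
  refine integrableOn_aux hC₁ (fun t => ((1 + C₂ * t) ^ i)⁻¹)
    ((measurable_const.add (measurable_const.mul measurable_id)).pow_const i).inv ?_
  intro t ht
  have ht0 : (0:ℝ) < t := ht
  have h1 : (0:ℝ) < 1 + C₂ * t := by nlinarith
  refine ⟨by positivity, ?_⟩
  rw [inv_le_one_iff₀]; right; exact one_le_pow₀ (by nlinarith)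

end ErgAux
end ErgAuxSec

open ErgAux

/-- Lemma 4 / Eq. (23): for a nonnegative random variable `Γ` with CDF
`F(y) = 1 - e^{-C₁y}(1+C₂y)^{-n}`, `C₁, C₂ > 0`, `C₂ ≠ 1`, `n` a positive integer,
`𝔼[log₂(1+Γ)] = (e^{C₁/C₂}/ln 2) Ψ(n)` with
`Ψ(n) = e^{(C₁/C₂)(C₂-1)}/(1-C₂)ⁿ · E₁(C₁) - ∑_{i=1}^n E_i(C₁/C₂)/(1-C₂)^{n+1-i}`,
where `E_v(x) = ∫₁^∞ e^{-tx} t^{-v} dt`. -/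
theorem ergodic_capacity_common_closed_form {Ω : Type*} [MeasureSpace Ω]
    [IsProbabilityMeasure (ℙ : Measure Ω)]
    (C₁ C₂ : ℝ) (n : ℕ) (hC₁ : 0 < C₁) (hC₂ : 0 < C₂) (hn : 0 < n) (hne : C₂ ≠ 1)
    (Γ : Ω → ℝ) (hm : Measurable Γ) (hnonneg : ∀ ω, 0 ≤ Γ ω)
    (hint : Integrable (fun ω => Real.logb 2 (1 + Γ ω)) ℙ)
    (hcdf : ∀ y : ℝ, 0 ≤ y →
      ((ℙ : Measure Ω) {ω | Γ ω ≤ y}).toReal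
        = 1 - Real.exp (-C₁ * y) * (1 + C₂ * y) ^ (-(n : ℝ))) :
    let Ev : ℝ → ℝ → ℝ := fun v x => ∫ t in Set.Ioi (1 : ℝ), Real.exp (-t * x) * t ^ (-v)
    let Ψ : ℕ → ℝ := fun m =>
      Real.exp ((C₁ / C₂) * (C₂ - 1)) / (1 - C₂) ^ m * Ev 1 C₁
        - ∑ i ∈ Finset.Icc 1 m, Ev (i : ℝ) (C₁ / C₂) / (1 - C₂) ^ (m + 1 - i)
    (∫ ω, Real.logb 2 (1 + Γ ω) ∂ℙ) = Real.exp (C₁ / C₂) / Real.log 2 * Ψ n := by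
  intro Ev Ψ
  have hlog2 : Real.log 2 ≠ 0 := ne_of_gt (Real.log_pos one_lt_two)
  have hC₂0 : C₂ ≠ 0 := ne_of_gt hC₂
  have h1C : (1:ℝ) - C₂ ≠ 0 := sub_ne_zero.mpr (Ne.symm hne)
  -- integrability of log
  have hlogint : Integrable (fun ω => Real.log (1 + Γ ω)) ℙ := by
    have heq : (fun ω => Real.log (1 + Γ ω))
        = fun ω => Real.log 2 * Real.logb 2 (1 + Γ ω) := by
      funext ω; rw [Real.logb, mul_div_cancel₀ _ hlog2]
    rw [heq]; exact hint.const_mul _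
  have hlognn : ∀ ω, 0 ≤ Real.log (1 + Γ ω) :=
    fun ω => Real.log_nonneg (by linarith [hnonneg ω])
  have hLnn : 0 ≤ ∫ ω, Real.log (1 + Γ ω) ∂ℙ := integral_nonneg hlognn
  have hInn : 0 ≤ ∫ t in Set.Ioi (0:ℝ), fA C₁ C₂ n t := by
    refine setIntegral_nonneg measurableSet_Ioi fun t ht => ?_
    have ht0 : (0:ℝ) < t := ht
    have h1 : (0:ℝ) < 1 + C₂ * t := by nlinarith
    have h2 : (0:ℝ) < 1 + t := by linarith
    unfold fA; positivity
  -- step 1 : layer cake, E[log(1+Γ)] = ∫_{Ioi 0} fA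
  have hLI : (∫ ω, Real.log (1 + Γ ω) ∂ℙ) = ∫ t in Set.Ioi (0:ℝ), fA C₁ C₂ n t := by
    have g_intble : ∀ t > (0:ℝ), IntervalIntegrable (fun s => (1 + s)⁻¹) volume 0 t := by
      intro t ht
      apply ContinuousOn.intervalIntegrable
      apply ContinuousOn.inv₀
      · exact (continuous_const.add continuous_id).continuousOn
      · intro s hs
        rw [Set.uIcc_of_le ht.le] at hs
        have hs0 : (0:ℝ) ≤ s := hs.1
        intro hc
        linarith [hc]
    have g_nn : ∀ᵐ t ∂(volume.restrict (Set.Ioi (0:ℝ))), 0 ≤ (fun s : ℝ => (1+s)⁻¹) t := by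
      rw [ae_restrict_iff' measurableSet_Ioi]
      refine ae_of_all _ fun t ht => ?_
      have ht0 : (0:ℝ) < t := ht
      simp only
      positivity
    have layer := lintegral_comp_eq_lintegral_meas_le_mul (ℙ : Measure Ω)
      (ae_of_all _ hnonneg) hm.aemeasurable g_intble g_nn
    have hpt : ∀ x : ℝ, 0 ≤ x → (∫ s in (0:ℝ)..x, (1 + s)⁻¹) = Real.log (1 + x) := by
      intro x hx
      have h := intervalIntegral.integral_comp_add_left (a := (0:ℝ)) (b := x)
        (fun u : ℝ => u⁻¹) 1
      rw [h, integral_inv (by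
        rw [show (1:ℝ) + 0 = 1 by norm_num, Set.uIcc_of_le (by linarith : (1:ℝ) ≤ 1 + x)]
        intro hc
        have := hc.1
        linarith)]
      norm_num
    have hLHS : (∫⁻ ω, ENNReal.ofReal (∫ s in (0:ℝ)..Γ ω, (1 + s)⁻¹) ∂ℙ)
        = ENNReal.ofReal (∫ ω, Real.log (1 + Γ ω) ∂ℙ) := by
      rw [ofReal_integral_eq_lintegral_ofReal hlogint (ae_of_all _ hlognn)]
      exact lintegral_congr fun ω => by rw [hpt _ (hnonneg ω)]
    have hmeaseq : ∀ᵐ t ∂(volume.restrict (Set.Ioi (0:ℝ))),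
        (ℙ : Measure Ω) {a | t ≤ Γ a} * ENNReal.ofReal ((1+t)⁻¹)
          = ENNReal.ofReal (fA C₁ C₂ n t) := by
      have h1 := meas_le_ae_eq_meas_lt (ℙ : Measure Ω) (volume : Measure ℝ) Γ
      filter_upwards [ae_restrict_of_ae h1, ae_restrict_mem measurableSet_Ioi]
        with t h1t ht
      have ht0 : (0:ℝ) < t := ht
      have hpos1 : (0:ℝ) < 1 + C₂ * t := by nlinarith
      have hpos2 : (0:ℝ) < 1 + t := by linarith
      have hms : MeasurableSet {a : Ω | Γ a ≤ t} := hm measurableSet_Iic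
      have hco : {a : Ω | t < Γ a} = {a : Ω | Γ a ≤ t}ᶜ := by
        ext a
        simp only [Set.mem_setOf_eq, Set.mem_compl_iff, not_le]
      have hnetop : ((1:ℝ≥0∞) - (ℙ : Measure Ω) {a | Γ a ≤ t}) ≠ ⊤ :=
        (lt_of_le_of_lt tsub_le_self ENNReal.one_lt_top).ne
      have hval : ((ℙ : Measure Ω) {a | t < Γ a})
          = ENNReal.ofReal (Real.exp (-C₁ * t) * ((1 + C₂ * t) ^ n)⁻¹) := by
        rw [hco, prob_compl_eq_one_sub hms, ← ENNReal.ofReal_toReal hnetop]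
        congr 1
        rw [ENNReal.toReal_sub_of_le prob_le_one ENNReal.one_ne_top, ENNReal.toReal_one,
          hcdf t ht0.le, Real.rpow_neg hpos1.le, Real.rpow_natCast]
        ring
      rw [h1t, hval, ← ENNReal.ofReal_mul (by positivity)]
      rfl
    have hfnn : 0 ≤ᵐ[volume.restrict (Set.Ioi (0:ℝ))] fA C₁ C₂ n := by
      filter_upwards [ae_restrict_mem measurableSet_Ioi] with t ht
      have ht0 : (0:ℝ) < t := ht
      have h1 : (0:ℝ) < 1 + C₂ * t := by nlinarith
      have h2 : (0:ℝ) < 1 + t := by linarith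
      unfold fA
      positivity
    have hRHS : (∫⁻ t in Set.Ioi (0:ℝ),
          (ℙ : Measure Ω) {a | t ≤ Γ a} * ENNReal.ofReal ((1+t)⁻¹))
        = ENNReal.ofReal (∫ t in Set.Ioi (0:ℝ), fA C₁ C₂ n t) := by
      rw [lintegral_congr_ae hmeaseq,
        ← ofReal_integral_eq_lintegral_ofReal (fA_integrableOn hC₁ hC₂ n) hfnn]
    apply (ENNReal.ofReal_eq_ofReal_iff hLnn hInn).mp
    rw [← hLHS, ← hRHS]
    exact layer
  -- step 2 : partial fractions split
  have hsplit : ∫ t in Set.Ioi (0:ℝ), fA C₁ C₂ n t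
      = ((1 - C₂) ^ n)⁻¹ * (∫ t in Set.Ioi (0:ℝ), gA C₁ t)
        - ∑ i ∈ Finset.Icc 1 n, C₂ * ((1 - C₂) ^ (n + 1 - i))⁻¹
            * (∫ t in Set.Ioi (0:ℝ), kA C₁ C₂ i t) := by
    have hptw : Set.EqOn (fA C₁ C₂ n)
        (fun t => ((1 - C₂) ^ n)⁻¹ * gA C₁ t
          - ∑ i ∈ Finset.Icc 1 n, C₂ * ((1 - C₂) ^ (n + 1 - i))⁻¹ * kA C₁ C₂ i t)
        (Set.Ioi 0) := by
      intro t ht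
      have ht0 : (0:ℝ) < t := ht
      have h1 : (0:ℝ) < 1 + C₂ * t := by nlinarith
      have h2 : (0:ℝ) < 1 + t := by linarith
      have hp := ErgAux.pf C₂ h1C t h2.ne' h1.ne' n
      unfold fA gA kA
      simp only
      calc Real.exp (-C₁*t) * ((1+C₂*t)^n)⁻¹ * (1+t)⁻¹
          = Real.exp (-C₁*t) * ((1+t) * (1+C₂*t)^n)⁻¹ := by rw [mul_inv]; ring
        _ = Real.exp (-C₁*t) * (((1-C₂)^n)⁻¹ * (1+t)⁻¹
              - ∑ i ∈ Finset.Icc 1 n, C₂ * ((1-C₂)^(n+1-i))⁻¹ * ((1+C₂*t)^i)⁻¹) := by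
            rw [hp]
        _ = _ := by
            rw [mul_sub, Finset.mul_sum]
            congr 1
            · ring
            · exact Finset.sum_congr rfl fun i hi => by ring
    rw [setIntegral_congr_fun measurableSet_Ioi hptw,
      integral_sub ((gA_integrableOn hC₁).const_mul _)
        (integrable_finset_sum _ fun i hi => (kA_integrableOn hC₁ hC₂ i).const_mul _),
      integral_const_mul, integral_finset_sum _ fun i hi => (kA_integrableOn hC₁ hC₂ i).const_mul _]
    simp only [integral_const_mul]
  -- step 3 : evaluations
  have hg_eval : ∫ t in Set.Ioi (0:ℝ), gA C₁ t = Real.exp C₁ * Ev 1 C₁ := by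
    have h := ErgAux.key_sub C₁ 1 1 one_pos
    simp only [Nat.cast_one, one_mul, pow_one] at h
    simp only [Ev, gA]
    rw [h, ← mul_assoc, ← Real.exp_add]
    norm_num
  have hk_eval : ∀ i : ℕ, ∫ t in Set.Ioi (0:ℝ), kA C₁ C₂ i t
      = C₂⁻¹ * Real.exp (C₁ / C₂) * Ev (i : ℝ) (C₁ / C₂) := by
    intro i
    have h := ErgAux.key_sub (C₁ / C₂) i C₂ hC₂
    rw [show C₂ * (C₁ / C₂) = C₁ from by field_simp] at h
    simp only [Ev, kA]
    rw [h]
    set K : ℝ := ∫ t in Set.Ioi (0:ℝ), Real.exp (-C₁ * t) * ((1 + C₂ * t) ^ i)⁻¹ with hK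
    have e1 : Real.exp (C₁ / C₂) * Real.exp (-(C₁ / C₂)) = 1 := by
      rw [← Real.exp_add]; simp
    have e2 : C₂⁻¹ * C₂ = 1 := inv_mul_cancel₀ hC₂0
    calc K = 1 * (1 * K) := by ring
      _ = (C₂⁻¹ * C₂) * ((Real.exp (C₁ / C₂) * Real.exp (-(C₁ / C₂))) * K) := by rw [e1, e2]
      _ = C₂⁻¹ * Real.exp (C₁ / C₂) * (C₂ * Real.exp (-(C₁ / C₂)) * K) := by ring
  -- step 4 : assemble
  have hexp : Real.exp (C₁ / C₂) * Real.exp ((C₁ / C₂) * (C₂ - 1)) = Real.exp C₁ := by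
    rw [← Real.exp_add]; congr 1; field_simp; ring
  have hgoal2 : (∫ ω, Real.log (1 + Γ ω) ∂ℙ) = Real.exp (C₁ / C₂) * Ψ n := by
    rw [hLI, hsplit, hg_eval]
    simp only [Ψ]
    rw [mul_sub, Finset.mul_sum]
    congr 1
    · rw [div_eq_mul_inv, ← hexp]
      ring
    · apply Finset.sum_congr rfl
      intro i hi
      rw [hk_eval i,
        show C₂ * ((1 - C₂) ^ (n + 1 - i))⁻¹ * (C₂⁻¹ * Real.exp (C₁ / C₂) * Ev (i:ℝ) (C₁ / C₂))
          = C₂ * C₂⁻¹ * (Real.exp (C₁ / C₂) * (Ev (i:ℝ) (C₁ / C₂) / (1 - C₂) ^ (n + 1 - i)))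
          from by rw [div_eq_mul_inv]; ring, mul_inv_cancel₀ hC₂0, one_mul]
  have hgoal3 : (fun ω => Real.logb 2 (1 + Γ ω))
      = fun ω => (Real.log 2)⁻¹ * Real.log (1 + Γ ω) := by
    funext ω; rw [Real.logb, div_eq_inv_mul]
  rw [hgoal3, integral_const_mul, hgoal2, div_eq_mul_inv]
  ring
end

section
/- Let $R_c \ge 0$ and $R_1 \le R_2 \le \dots \le R_K$ be given rates. Define the water-filling allocation: let $j^*$ be the largest index $j \le K$ such that with level $L_j = (R_c + \sum_{i=1}^j R_i)/j$ one has $R_j \le L_j$, and set $C_k = \max(L_{j^*} - R_k, 0)$. Then $\sum_{k=1}^K C_k = R_c$, each $C_k \ge 0$, and this allocation maximizes $\min_k (C_k + R_k)$ over all nonnegative allocations with $\sum_k C_k = R_c$. -/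
open Finset

/-- Water-filling solves the max-min common-rate-splitting problem `𝒫₃`: with sorted
rates `R 0 ≤ R 1 ≤ … ≤ R (K-1)` and total common rate `Rc ≥ 0`, taking the largest
`j < K` with `R j ≤ L_j := (Rc + ∑_{i≤j} R i)/(j+1)`, and setting
`C k = max (L_{j*} - R k) 0`, the allocation sums to `Rc`, is nonnegative, and maximizes
`min_k (C k + R k)` over all nonnegative allocations summing to `Rc`. -/
theorem waterfilling_maximizes_min_rate (K : ℕ) (hK : 0 < K) (R : ℕ → ℝ)
    (hsorted : ∀ i j : ℕ, i ≤ j → j < K → R i ≤ R j) (hR : ∀ k, 0 ≤ R k)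
    (Rc : ℝ) (hRc : 0 ≤ Rc) :
    let S := (Finset.range K).filter
      (fun j => R j ≤ (Rc + ∑ i ∈ Finset.range (j + 1), R i) / ((j : ℝ) + 1))
    let jstar := S.sup id
    let L := (Rc + ∑ i ∈ Finset.range (jstar + 1), R i) / ((jstar : ℝ) + 1)
    let C : ℕ → ℝ := fun k => max (L - R k) 0
    (∑ k ∈ Finset.range K, C k = Rc) ∧ (∀ k, 0 ≤ C k) ∧
      ∀ C' : ℕ → ℝ, (∀ k, k < K → 0 ≤ C' k) → (∑ k ∈ Finset.range K, C' k = Rc) →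
        (Finset.range K).inf' (Finset.nonempty_range_iff.mpr hK.ne')
            (fun k => C' k + R k)
          ≤ (Finset.range K).inf' (Finset.nonempty_range_iff.mpr hK.ne')
            (fun k => C k + R k) := by
  intro S jstar L C
  have h0S : 0 ∈ S := by
    simp only [S, Finset.mem_filter, Finset.mem_range]
    refine ⟨hK, ?_⟩
    simp [Finset.sum_range_one]
    linarith
  have hSne : S.Nonempty := ⟨0, h0S⟩
  have hjS : jstar ∈ S := by
    obtain ⟨b, hb, he⟩ := Finset.exists_mem_eq_sup S hSne id
    simpa [jstar, he] using hb
  have hjK : jstar < K := (Finset.mem_range.1 (Finset.mem_filter.1 hjS).1)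
  have hjL : R jstar ≤ L := (Finset.mem_filter.1 hjS).2
  have hjpos : (0:ℝ) < (jstar : ℝ) + 1 := by positivity
  -- key: for k ≤ jstar, R k ≤ L
  have hle : ∀ k, k ≤ jstar → R k ≤ L := fun k hk =>
    le_trans (hsorted k jstar hk hjK) hjL
  -- key: for jstar < k < K, L ≤ R k
  have hgt : ∀ k, jstar < k → k < K → L ≤ R k := by
    intro k hk hkK
    have h1K : jstar + 1 < K := lt_of_le_of_lt hk hkK
    have hnot : jstar + 1 ∉ S := by
      intro h
      have := Finset.le_sup (f := id) h
      simp only [id] at this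
      omega
    have hlt : ¬ R (jstar+1) ≤ (Rc + ∑ i ∈ Finset.range (jstar + 2), R i) / ((jstar : ℝ) + 1 + 1) := by
      intro h
      exact hnot (Finset.mem_filter.2 ⟨Finset.mem_range.2 h1K, by push_cast; convert h using 3 <;> push_cast <;> ring⟩)
    push_neg at hlt
    have hsum : ∑ i ∈ Finset.range (jstar + 2), R i
        = (∑ i ∈ Finset.range (jstar + 1), R i) + R (jstar + 1) :=
      Finset.sum_range_succ R (jstar + 1)
    have hLlt : L < R (jstar + 1) := by
      rw [hsum] at hlt
      rw [div_lt_iff₀ (by positivity)] at hlt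
      rw [div_lt_iff₀ hjpos]
      nlinarith [hlt]
    exact le_of_lt (lt_of_lt_of_le hLlt (hsorted (jstar+1) k hk hkK))
  have hCle : ∀ k, k ≤ jstar → C k = L - R k := by
    intro k hk
    simp only [C]
    rw [max_eq_left]
    linarith [hle k hk]
  have hCgt : ∀ k, jstar < k → k < K → C k = 0 := by
    intro k hk hkK
    simp only [C]
    rw [max_eq_right]
    linarith [hgt k hk hkK]
  -- sum over range (jstar+1)
  have hsum1 : ∑ k ∈ Finset.range (jstar + 1), C k = Rc := by
    have : ∑ k ∈ Finset.range (jstar + 1), C k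
        = ∑ k ∈ Finset.range (jstar + 1), (L - R k) := by
      apply Finset.sum_congr rfl
      intro k hk
      exact hCle k (Nat.lt_succ_iff.1 (Finset.mem_range.1 hk))
    rw [this, Finset.sum_sub_distrib, Finset.sum_const, Finset.card_range,
      nsmul_eq_mul]
    have hL : ((jstar : ℝ) + 1) * L = Rc + ∑ i ∈ Finset.range (jstar + 1), R i := by
      simp only [L]
      rw [mul_div_assoc']
      exact mul_div_cancel_left₀ _ hjpos.ne'
    push_cast
    linarith [hL]
  have hsumC : ∑ k ∈ Finset.range K, C k = Rc := by
    rw [← Finset.sum_range_add_sum_Ico C (Nat.succ_le_of_lt hjK), hsum1]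
    have : ∑ k ∈ Finset.Ico (jstar + 1) K, C k = 0 := by
      apply Finset.sum_eq_zero
      intro k hk
      obtain ⟨h1, h2⟩ := Finset.mem_Ico.1 hk
      exact hCgt k h1 h2
    rw [this]; ring
  refine ⟨hsumC, fun k => le_max_right _ _, ?_⟩
  intro C' hC'nn hC'sum
  -- RHS inf' = L
  have hRHS : L ≤ (Finset.range K).inf' (Finset.nonempty_range_iff.mpr hK.ne')
      (fun k => C k + R k) := by
    apply Finset.le_inf'
    intro k hk
    rcases le_or_gt k jstar with h | h
    · rw [hCle k h]; linarith
    · rw [hCgt k h (Finset.mem_range.1 hk)]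
      linarith [hgt k h (Finset.mem_range.1 hk)]
  refine le_trans ?_ hRHS
  by_contra hc
  push_neg at hc
  have hall : ∀ k, k < K → L < C' k + R k := by
    intro k hk
    exact lt_of_lt_of_le hc (Finset.inf'_le _ (Finset.mem_range.2 hk))
  have hlt2 : Rc < ∑ k ∈ Finset.range (jstar + 1), C' k := by
    calc Rc = ∑ k ∈ Finset.range (jstar + 1), (L - R k) := by
          rw [← hsum1]
          exact Finset.sum_congr rfl fun k hk =>
            hCle k (Nat.lt_succ_iff.1 (Finset.mem_range.1 hk))
      _ < ∑ k ∈ Finset.range (jstar + 1), C' k := by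
          apply Finset.sum_lt_sum_of_nonempty (Finset.nonempty_range_iff.2 (Nat.succ_ne_zero _))
          intro k hk
          have hkK : k < K := lt_of_lt_of_le (Finset.mem_range.1 hk) hjK
          linarith [hall k hkK]
  have hle2 : ∑ k ∈ Finset.range (jstar + 1), C' k ≤ ∑ k ∈ Finset.range K, C' k := by
    apply Finset.sum_le_sum_of_subset_of_nonneg
    · exact Finset.range_subset_range.2 (Nat.succ_le_of_lt hjK)
    · intro k hk _
      exact hC'nn k (Finset.mem_range.1 hk)
  rw [hC'sum] at hle2
  linarith
end
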